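/- Let L be a complete lattice and p ∈ L with Ω(p) ≠ ∅, i.e., there exists x ≠ ⊥ with x ⊓ p = ⊥. Then p is strongly irreducible in L if and only if p is irreducible in L and weakly ∧-distributive in L. -/
import Mathlib


/-- An element `p` of a lattice is *strongly irreducible* if
`a ⊓ b ≤ p` implies `a ≤ p` or `b ≤ p` for all `a b`. -/
def StronglyIrreducible {α : Type*} [SemilatticeInf α] (p : α) : Prop :=
  ∀ a b : α, a ⊓ b ≤ p → a ≤ p ∨ b ≤ p

/-- An element `p` of a meet-semilattice is *irreducible* if
`a ⊓ b ≤ p` implies `a ≤ p` or `b ≤ p` for all `a b` lying above `p`. -/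
def Irreducible' {α : Type*} [SemilatticeInf α] (p : α) : Prop :=
  ∀ a b : α, p ≤ a → p ≤ b → a ⊓ b ≤ p → a ≤ p ∨ b ≤ p

/-- Suppose `Ω(p) ≠ ∅`. Then `p` is strongly irreducible iff `p` is irreducible and
weakly ∧-distributive. -/
theorem stronglyIrreducible_iff_irreducible_and_weaklyDistributive
    {α : Type*} [CompleteLattice α] (p : α)
    (hΩ : ∃ x : α, x ≠ ⊥ ∧ x ⊓ p = ⊥) :
    StronglyIrreducible p ↔
      Irreducible' p ∧ (∀ x y : α, x ⊓ y = ⊥ → p = (x ⊔ p) ⊓ (y ⊔ p)) := by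
  constructor
  · intro hS
    refine ⟨fun a b _ _ h => hS a b h, fun x y hxy => ?_⟩
    rcases hS x y (hxy ▸ bot_le) with h | h
    · rw [sup_eq_right.mpr h]
      exact (inf_eq_left.mpr le_sup_right).symm
    · rw [sup_eq_right.mpr h]
      exact (inf_eq_right.mpr le_sup_right).symm
  · rintro ⟨hIrr, hWD⟩
    obtain ⟨x, hx, hxp⟩ := hΩ
    -- key: if x ⊓ a ≤ p then a ≤ p
    have key : ∀ a : α, x ⊓ a ≤ p → a ≤ p := by
      intro a h
      have hxa : x ⊓ a = ⊥ := le_bot_iff.mp (hxp ▸ le_inf inf_le_left h)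
      have := hWD x a hxa
      rcases hIrr (x ⊔ p) (a ⊔ p) le_sup_right le_sup_right this.ge with h1 | h1
      · exact absurd (le_bot_iff.mp (hxp ▸ le_inf le_rfl
          (le_sup_left.trans h1))) hx
      · exact le_sup_left.trans h1
    intro a b hab
    have hmeet : (x ⊓ a) ⊓ (x ⊓ b) = ⊥ := by
      apply le_bot_iff.mp
      rw [← hxp]
      exact le_inf (inf_le_left.trans inf_le_left)
        (le_inf (inf_le_left.trans inf_le_right) (inf_le_right.trans inf_le_right)
          |>.trans hab)
    have := hWD _ _ hmeet
    rcases hIrr (x ⊓ a ⊔ p) (x ⊓ b ⊔ p) le_sup_right le_sup_right this.ge with h1 | h1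
    · exact Or.inl (key a (le_sup_left.trans h1))
    · exact Or.inr (key b (le_sup_left.trans h1))
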